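/- Let v₁, …, vₙ (n ≥ 2) be distinct points in ℝᵈ and let V be the n×n matrix with entries V_{ij} = ‖vᵢ − vⱼ‖². Then V has exactly one positive eigenvalue. -/

import Mathlib

open Matrix Finset

lemma dot_basis {n : ℕ} {V : Matrix (Fin n) (Fin n) ℝ} (hV : V.IsHermitian) (k l : Fin n) :
    ⇑(hV.eigenvectorBasis k) ⬝ᵥ ⇑(hV.eigenvectorBasis l) = if k = l then 1 else 0 := by
  have h := orthonormal_iff_ite.mp hV.eigenvectorBasis.orthonormal k l
  rw [← h]
  simp [PiLp.inner_apply, dotProduct, mul_comm]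

lemma quad_nonpos {d n : ℕ} (v : Fin n → EuclideanSpace ℝ (Fin d))
    (V : Matrix (Fin n) (Fin n) ℝ) (hVdef : ∀ i j, V i j = ‖v i - v j‖ ^ 2)
    (x : Fin n → ℝ) (hsum : ∑ k, x k = 0) : x ⬝ᵥ (V *ᵥ x) ≤ 0 := by
  have key : x ⬝ᵥ (V *ᵥ x)
      = (∑ i, x i * ‖v i‖ ^ 2) * (∑ j, x j) + (∑ i, x i) * (∑ j, x j * ‖v j‖ ^ 2)
        - 2 * ∑ i, ∑ j, x i * x j * (inner ℝ (v i) (v j) : ℝ) := by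
    simp only [dotProduct, Matrix.mulVec, dotProduct, hVdef, norm_sub_sq_real]
    rw [Finset.sum_mul_sum, Finset.sum_mul_sum, Finset.mul_sum, ← Finset.sum_add_distrib,
      ← Finset.sum_sub_distrib]
    refine Finset.sum_congr rfl fun i _ => ?_
    rw [Finset.mul_sum, Finset.mul_sum, ← Finset.sum_add_distrib, ← Finset.sum_sub_distrib]
    refine Finset.sum_congr rfl fun j _ => ?_
    ring
  have hG : ∑ i, ∑ j, x i * x j * (inner ℝ (v i) (v j) : ℝ)
      = (inner ℝ (∑ i, x i • v i) (∑ j, x j • v j) : ℝ) := by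
    simp_rw [sum_inner, inner_sum, real_inner_smul_left, real_inner_smul_right]
    refine Finset.sum_congr rfl fun i _ => Finset.sum_congr rfl fun j _ => by ring
  rw [key, hsum, hG]
  have h2 := real_inner_self_nonneg (x := ∑ i, x i • v i)
  nlinarith [h2]

theorem stmt0 (d n : ℕ) (hn : 2 ≤ n) (v : Fin n → EuclideanSpace ℝ (Fin d))
    (hv : Function.Injective v)
    (V : Matrix (Fin n) (Fin n) ℝ) (hVdef : ∀ i j, V i j = ‖v i - v j‖ ^ 2)
    (hV : V.IsHermitian) :
    (Finset.univ.filter fun i => 0 < hV.eigenvalues i).card = 1 := by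
  set e := hV.eigenvectorBasis with he
  -- uniqueness
  have huniq : ∀ i j, 0 < hV.eigenvalues i → 0 < hV.eigenvalues j → i = j := by
    intro i j hi hj
    by_contra hij
    have hq : ∀ a b : ℝ, (a • ⇑(e i) + b • ⇑(e j)) ⬝ᵥ (V *ᵥ (a • ⇑(e i) + b • ⇑(e j)))
        = a ^ 2 * hV.eigenvalues i + b ^ 2 * hV.eigenvalues j := by
      intro a b
      rw [Matrix.mulVec_add, Matrix.mulVec_smul, Matrix.mulVec_smul, he,
        hV.mulVec_eigenvectorBasis, hV.mulVec_eigenvectorBasis]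
      simp only [add_dotProduct, dotProduct_add, smul_dotProduct,
        dotProduct_smul, ← he, dot_basis hV, if_pos rfl, if_neg hij,
        if_neg (Ne.symm hij), smul_eq_mul, if_true]
      simp only [he, dot_basis hV, if_pos rfl, if_neg hij, if_neg (Ne.symm hij), if_true]
      ring
    set s := ∑ k, (⇑(e i)) k with hs
    set t := ∑ k, (⇑(e j)) k with ht
    have hsumx : ∀ a b : ℝ, ∑ k, (a • ⇑(e i) + b • ⇑(e j)) k = a * s + b * t := by
      intro a b
      simp only [Pi.add_apply, Pi.smul_apply, smul_eq_mul, Finset.sum_add_distrib,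
        ← Finset.mul_sum, hs, ht]
    by_cases hs0 : s = 0
    · have h1 := quad_nonpos v V hVdef ((1:ℝ) • ⇑(e i) + (0:ℝ) • ⇑(e j))
        (by rw [hsumx]; rw [hs0]; ring)
      rw [hq] at h1
      nlinarith
    · have h1 := quad_nonpos v V hVdef (t • ⇑(e i) + (-s) • ⇑(e j))
        (by rw [hsumx]; ring)
      rw [hq] at h1
      have hs2 : 0 < s ^ 2 := by positivity
      nlinarith [sq_nonneg t, mul_nonneg (sq_nonneg t) hi.le, mul_pos hs2 hj]
  -- trace is zero
  have htr : ∑ k, hV.eigenvalues k = 0 := by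
    have h1 : Matrix.trace V = ∑ k, hV.eigenvalues k := by
      conv_lhs => rw [hV.spectral_theorem]
      rw [Unitary.conjStarAlgAut_apply, Matrix.trace_mul_cycle, Unitary.coe_star_mul_self, Matrix.one_mul,
        Matrix.trace_diagonal]
      simp
    have h2 : Matrix.trace V = 0 := by
      simp [Matrix.trace, Matrix.diag, hVdef, sub_self]
    rw [← h1, h2]
  -- existence
  have hex : ∃ i, 0 < hV.eigenvalues i := by
    by_contra hcon
    push_neg at hcon
    have hall : ∀ i ∈ Finset.univ, hV.eigenvalues i = 0 :=
      (Finset.sum_eq_zero_iff_of_nonpos fun j _ => hcon j).mp htr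
    have hV0 : V = 0 := by
      rw [hV.spectral_theorem]
      have hD : Matrix.diagonal (RCLike.ofReal ∘ hV.eigenvalues) = (0 : Matrix (Fin n) (Fin n) ℝ) := by
        ext a b
        by_cases hab : a = b <;>
          simp [Matrix.diagonal, hab, hall a (Finset.mem_univ a), hall b (Finset.mem_univ b)]
      rw [hD, map_zero]
    have hne : (⟨0, by omega⟩ : Fin n) ≠ ⟨1, by omega⟩ := by simp [Fin.ext_iff]
    have hvne : v ⟨0, by omega⟩ ≠ v ⟨1, by omega⟩ := fun h => hne (hv h)
    have h3 : V ⟨0, by omega⟩ ⟨1, by omega⟩ = 0 := by rw [hV0]; rfl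
    rw [hVdef] at h3
    exact (pow_ne_zero 2 (norm_ne_zero_iff.mpr (sub_ne_zero.mpr hvne))) h3
  obtain ⟨ip, hip⟩ := hex
  rw [Finset.card_eq_one]
  refine ⟨ip, ?_⟩
  ext k
  simp only [Finset.mem_filter, Finset.mem_univ, true_and, Finset.mem_singleton]
  exact ⟨fun h => huniq k ip h hip, fun h => h ▸ hip⟩
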